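/- Let z : ℝ → ℝⁿ be differentiable with z(t) ≠ 0 for all t and satisfying z'(t) = −A(z(t))z(t). Define y(t) := z(t)/‖z(t)‖₂. Then y is differentiable and satisfies y'(t) = p(y(t))y(t) − A(y(t))y(t) for all t. -/

import Mathlib

open Matrix Asymptotics Topology
open scoped RealInnerProductSpace

noncomputable def mvCLM {ι : Type*} [Fintype ι] [DecidableEq ι] (M : Matrix ι ι ℝ) :
    EuclideanSpace ℝ ι →L[ℝ] EuclideanSpace ℝ ι :=
  LinearMap.toContinuousLinearMap (Matrix.toEuclideanLin M)

noncomputable def invitPsi {n : ℕ} (J : EuclideanSpace ℝ (Fin n) → Matrix (Fin n) (Fin n) ℝ)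
    (σ : ℝ) (v : EuclideanSpace ℝ (Fin n)) : EuclideanSpace ℝ (Fin n) :=
  mvCLM ((J v - σ • 1)⁻¹) v

noncomputable def invitPhi {n : ℕ} (J : EuclideanSpace ℝ (Fin n) → Matrix (Fin n) (Fin n) ℝ)
    (σ : ℝ) (v : EuclideanSpace ℝ (Fin n)) : EuclideanSpace ℝ (Fin n) :=
  ‖invitPsi J σ v‖⁻¹ • invitPsi J σ v

noncomputable def rayQuot {n : ℕ} (A : EuclideanSpace ℝ (Fin n) → Matrix (Fin n) (Fin n) ℝ)
    (v : EuclideanSpace ℝ (Fin n)) : ℝ :=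
  ⟪v, mvCLM (A v) v⟫ / ⟪v, v⟫

/-- If `z` is a nonvanishing solution of `z' = −A(z)z`, then the
normalization `y(t) = z(t)/‖z(t)‖` satisfies `y' = p(y)y − A(y)y`. -/
theorem stmt13 {n : ℕ} (hn : 1 ≤ n)
    (A : EuclideanSpace ℝ (Fin n) → Matrix (Fin n) (Fin n) ℝ)
    (hsymm : ∀ v : EuclideanSpace ℝ (Fin n), v ≠ 0 → (A v).IsSymm)
    (hsmooth : ContDiffOn ℝ 1 (fun w i j => A w i j) {(0 : EuclideanSpace ℝ (Fin n))}ᶜ)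
    (hscale : ∀ α : ℝ, α ≠ 0 → ∀ v : EuclideanSpace ℝ (Fin n), v ≠ 0 → A (α • v) = A v)
    (z : ℝ → EuclideanSpace ℝ (Fin n)) (hz0 : ∀ t, z t ≠ 0)
    (hz : ∀ t, HasDerivAt z (-(mvCLM (A (z t)) (z t))) t) :
    ∀ t, HasDerivAt (fun s => ‖z s‖⁻¹ • z s)
      (rayQuot A (‖z t‖⁻¹ • z t) • (‖z t‖⁻¹ • z t) -
        mvCLM (A (‖z t‖⁻¹ • z t)) (‖z t‖⁻¹ • z t)) t := by
  intro t
  set w := z t with hw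
  set c : ℝ := ‖z t‖ with hcdef
  have hc : c ≠ 0 := norm_ne_zero_iff.mpr (hz0 t)
  set v' : EuclideanSpace ℝ (Fin n) := -(mvCLM (A w) w) with hv'
  -- derivative of norm
  have hq : HasDerivAt (fun s => ‖z s‖ ^ 2) (2 * ⟪w, v'⟫) t := (hz t).norm_sq
  have hsq := hq.sqrt (by positivity : ‖z t‖ ^ 2 ≠ 0)
  have hnorm : HasDerivAt (fun s => ‖z s‖) (⟪w, v'⟫ / c) t := by
    have heq : (fun s => Real.sqrt (‖z s‖ ^ 2)) = fun s => ‖z s‖ := by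
      funext s; exact Real.sqrt_sq (norm_nonneg _)
    rw [heq] at hsq
    convert hsq using 1
    rw [Real.sqrt_sq (norm_nonneg _)]
    field_simp
    rw [hcdef, mul_div_cancel_right₀ _ (norm_ne_zero_iff.mpr (hz0 t))]
  have hinv : HasDerivAt (fun s => ‖z s‖⁻¹) (-(⟪w, v'⟫ / c) / c ^ 2) t := hnorm.inv hc
  have hy := hinv.smul (hz t)
  refine hy.congr_deriv ?_
  symm
  -- algebra
  have hAy : A (c⁻¹ • w) = A w := hscale c⁻¹ (inv_ne_zero hc) w (hz0 t)
  have hMsmul : mvCLM (A (‖z t‖⁻¹ • z t)) (‖z t‖⁻¹ • z t) = c⁻¹ • mvCLM (A w) w := by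
    rw [← hcdef, ← hw, hAy, ContinuousLinearMap.map_smul]
  have hray : rayQuot A (‖z t‖⁻¹ • z t) = ⟪w, mvCLM (A w) w⟫ / c ^ 2 := by
    rw [← hcdef, ← hw]
    unfold rayQuot
    rw [hAy, ContinuousLinearMap.map_smul, real_inner_smul_left, real_inner_smul_right,
      real_inner_smul_left, real_inner_smul_right, real_inner_self_eq_norm_sq, ← hcdef]
    field_simp
  rw [hMsmul, hray, ← hcdef, ← hw]
  have hinnerv' : ⟪w, v'⟫ = -⟪w, mvCLM (A w) w⟫ := by
    rw [hv', inner_neg_right]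
  rw [hinnerv']
  set S := ⟪w, mvCLM (A w) w⟫
  set M := mvCLM (A w) w
  match_scalars
  all_goals field_simp
  all_goals exact Or.inl (by ring)
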